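/- arXiv:0803.4279 — 2 statements merged into one kernel-verified Lean document; each statement's English description precedes it below -/
import Mathlib

section
/- The functional φ is centered on the c-free Appell polynomials and its covariances with them are the two-state free cumulants: φ(Aₙ) = 0 for every n ≥ 1, and φ(A₁·Aₙ) = s_{n+1} for every n ≥ 1. -/
/-- The one-variable c-free Appell polynomials: `A₀ = 1` and
`Aₙ₊₁ = x·Aₙ − Σ_{j=1}^{n} rⱼ·A_{n+1−j} − s_{n+1}·1`. -/
noncomputable def cfAppell (r s : ℕ → ℂ) : ℕ → Polynomial ℂ
  | 0 => 1
  | n + 1 =>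
      Polynomial.X * cfAppell r s n
        - ∑ j ∈ Finset.range n, Polynomial.C (r (j + 1)) * cfAppell r s (n - j)
        - Polynomial.C (s (n + 1))
  termination_by n => n
  decreasing_by all_goals omega

/-- Substitution `Σ_{k≥1} rₖ·gᵏ` of a power series `g` with zero constant term into the
series `R(z) = Σ_{k≥1} rₖ zᵏ`, computed coefficientwise (for such `g`, the coefficient
of `wⁿ` in `Σ_{k≥1} rₖ gᵏ` is the finite sum `Σ_{k=1}^{n} rₖ·(coeff of wⁿ in gᵏ)`). -/
noncomputable def substSeries (r : ℕ → ℂ) (g : PowerSeries ℂ) : PowerSeries ℂ :=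
  PowerSeries.mk fun n => ∑ k ∈ Finset.Icc 1 n, r k * PowerSeries.coeff (R := ℂ) n (g ^ k)

open PowerSeries Finset


open PowerSeries Finset

lemma lem1 (M : PowerSeries ℂ) (k n : ℕ) (h : k < n) :
    coeff (R := ℂ) k ((X * (1 + M)) ^ n) = 0 := by
  rw [mul_pow, coeff_X_pow_mul', if_neg (by omega)]

lemma lem2 (M : PowerSeries ℂ) (hM0 : PowerSeries.constantCoeff (R := ℂ) M = 0) (n : ℕ) :
    coeff (R := ℂ) n ((X * (1 + M)) ^ n) = 1 := by
  rw [mul_pow, coeff_X_pow_mul', if_pos le_rfl]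
  simp [coeff_zero_eq_constantCoeff, map_pow, hM0]

lemma coeff_substSeries_pad (M : PowerSeries ℂ) (t : ℕ → ℂ) (p m : ℕ) (hpm : p ≤ m) :
    coeff (R := ℂ) p (substSeries t (X * (1 + M)))
      = ∑ j ∈ Icc 1 m, t j * coeff (R := ℂ) p ((X * (1 + M)) ^ j) := by
  rw [substSeries, coeff_mk]
  refine sum_subset (Icc_subset_Icc_right hpm) fun j hj hj' => ?_
  have : p < j := by simp only [mem_Icc] at hj hj'; omega
  rw [lem1 M _ _ this, mul_zero]

lemma lemMul (M : PowerSeries ℂ) (t : ℕ → ℂ) (h : PowerSeries ℂ) (m : ℕ) :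
    coeff (R := ℂ) m (substSeries t (X * (1 + M)) * h)
      = ∑ j ∈ Icc 1 m, t j * coeff (R := ℂ) m ((X * (1 + M)) ^ j * h) := by
  rw [coeff_mul]
  have key : ∀ x ∈ antidiagonal m,
      coeff (R := ℂ) x.1 (substSeries t (X * (1 + M))) * coeff (R := ℂ) x.2 h
        = ∑ j ∈ Icc 1 m, t j * (coeff (R := ℂ) x.1 ((X * (1 + M)) ^ j) * coeff (R := ℂ) x.2 h) := by
    intro x hx
    have hx1 : x.1 ≤ m := by have := mem_antidiagonal.mp hx; omega
    rw [coeff_substSeries_pad M t _ m hx1, sum_mul]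
    exact sum_congr rfl fun j _ => by ring
  rw [sum_congr rfl key, sum_comm]
  refine sum_congr rfl fun j _ => ?_
  rw [← mul_sum, coeff_mul]

lemma sum_Icc_one (k : ℕ) (f : ℕ → ℂ) :
    ∑ j ∈ Icc 1 k, f j = ∑ i ∈ range k, f (i + 1) := by
  rw [← Finset.Ico_add_one_right_eq_Icc, Finset.sum_Ico_eq_sum_range]
  simp [add_comm]

noncomputable def Qaux (s : ℕ → ℂ) (M : PowerSeries ℂ) : PowerSeries ℂ :=
  PowerSeries.mk fun k => ∑ n ∈ range (k + 1), s (n + 1) * coeff (R := ℂ) k ((X * (1 + M)) ^ n)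

lemma lemQdecomp (s : ℕ → ℂ) (M : PowerSeries ℂ) :
    Qaux s M = C (R := ℂ) (s 1) + substSeries (fun j => s (j + 1)) (X * (1 + M)) := by
  ext k
  rw [Qaux, coeff_mk, map_add, substSeries, coeff_mk]
  cases k with
  | zero => simp
  | succ k' =>
    rw [sum_range_succ']
    have h0 : s (0 + 1) * coeff (R := ℂ) (k' + 1) ((X * (1 + M)) ^ 0) = 0 := by
      simp [coeff_one]
    rw [h0, add_zero, coeff_C, if_neg (Nat.succ_ne_zero k'), zero_add, sum_Icc_one]

lemma lemUQ (s : ℕ → ℂ) (M : PowerSeries ℂ) :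
    (X * (1 + M)) * Qaux s M = substSeries s (X * (1 + M)) := by
  rw [lemQdecomp, mul_add]
  ext k
  rw [map_add]
  cases k with
  | zero =>
    simp [substSeries, coeff_mk, coeff_zero_eq_constantCoeff, mul_comm]
  | succ k' =>
    rw [mul_comm ((X : PowerSeries ℂ) * (1 + M)) (C (R := ℂ) (s 1)), coeff_C_mul,
      mul_comm ((X : PowerSeries ℂ) * (1 + M)) (substSeries _ _), lemMul,
      substSeries, coeff_mk, sum_Icc_one, sum_Icc_one]
    have hpow : ∀ i ∈ range (k' + 1),
        s (i + 1 + 1) * coeff (R := ℂ) (k' + 1) ((X * (1 + M)) ^ (i + 1) * (X * (1 + M)))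
          = s (i + 2) * coeff (R := ℂ) (k' + 1) ((X * (1 + M)) ^ (i + 2)) := by
      intro i _
      rw [← pow_succ]
    rw [sum_congr rfl hpow, sum_range_succ, lem1 M _ _ (by omega), mul_zero, add_zero]
    conv_rhs => rw [sum_range_succ']
    rw [add_comm]
    simp [pow_one]

lemma lemEta (s : ℕ → ℂ) (M η : PowerSeries ℂ)
    (hη : η = (1 + M)⁻¹ * substSeries s (PowerSeries.X * (1 + M)))
    (hM0 : PowerSeries.constantCoeff (R := ℂ) M = 0) :
    η = X * Qaux s M := by
  have hc : constantCoeff (R := ℂ) (1 + M) ≠ 0 := by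
    rw [map_add, hM0, map_one, add_zero]; exact one_ne_zero
  have hu : (X * (1 + M) : PowerSeries ℂ) ≠ 0 := by
    intro h
    have := lem2 M hM0 1
    rw [pow_one, h, map_zero] at this
    exact one_ne_zero this.symm
  apply mul_right_cancel₀ hu
  calc η * (X * (1 + M))
      = X * (((1 + M)⁻¹ * (1 + M)) * substSeries s (X * (1 + M))) := by
        rw [hη]; ring
    _ = X * substSeries s (X * (1 + M)) := by
        rw [PowerSeries.inv_mul_cancel _ hc, one_mul]
    _ = X * ((X * (1 + M)) * Qaux s M) := by rw [lemUQ]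
    _ = X * Qaux s M * (X * (1 + M)) := by ring

lemma etaCoeff0 (s : ℕ → ℂ) (M η : PowerSeries ℂ)
    (hη : η = (1 + M)⁻¹ * substSeries s (PowerSeries.X * (1 + M)))
    (hM0 : PowerSeries.constantCoeff (R := ℂ) M = 0) :
    constantCoeff (R := ℂ) η = 0 := by
  rw [lemEta s M η hη hM0]; simp

lemma etaCoeffSucc (s : ℕ → ℂ) (M η : PowerSeries ℂ)
    (hη : η = (1 + M)⁻¹ * substSeries s (PowerSeries.X * (1 + M)))
    (hM0 : PowerSeries.constantCoeff (R := ℂ) M = 0) (k : ℕ) :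
    coeff (R := ℂ) (k + 1) η = ∑ n ∈ range (k + 1), s (n + 1) * coeff (R := ℂ) k ((X * (1 + M)) ^ n) := by
  rw [lemEta s M η hη hM0, coeff_succ_X_mul, Qaux, coeff_mk]

lemma lemPow (r : ℕ → ℂ) (M : PowerSeries ℂ)
    (hM : M = substSeries r (PowerSeries.X * (1 + M))) (n k : ℕ) :
    coeff (R := ℂ) (k + 1) ((X * (1 + M)) ^ (n + 1))
      = coeff (R := ℂ) k ((X * (1 + M)) ^ n)
        + ∑ j ∈ Icc 1 k, r j * coeff (R := ℂ) k ((X * (1 + M)) ^ (j + n)) := by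
  have h1 : ((X * (1 + M)) ^ (n + 1) : PowerSeries ℂ)
      = X * ((X * (1 + M)) ^ n + M * (X * (1 + M)) ^ n) := by ring
  rw [h1, coeff_succ_X_mul, map_add]
  congr 1
  nth_rewrite 1 [hM]
  rw [lemMul]
  refine sum_congr rfl fun j _ => ?_
  rw [← pow_add]

lemma cfAppell_rec (r s : ℕ → ℂ) (n : ℕ) :
    Polynomial.X * cfAppell r s n
      = cfAppell r s (n + 1)
        + (∑ j ∈ Finset.range n, Polynomial.C (r (j + 1)) * cfAppell r s (n - j))
        + Polynomial.C (s (n + 1)) := by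
  rw [cfAppell]
  ring

noncomputable def Tc (r s : ℕ → ℂ) (M : PowerSeries ℂ) (k : ℕ) : Polynomial ℂ :=
  ∑ n ∈ range (k + 1), Polynomial.C (coeff (R := ℂ) k ((X * (1 + M)) ^ n)) * cfAppell r s n

lemma Tc_zero (r s : ℕ → ℂ) (M : PowerSeries ℂ) : Tc r s M 0 = 1 := by
  simp [Tc, cfAppell]

lemma sum_tri (k : ℕ) (G : ℕ → ℕ → Polynomial ℂ) :
    ∑ n ∈ range (k + 1), ∑ j ∈ range n, G n j
      = ∑ a ∈ range (k + 1), ∑ b ∈ Icc 1 (k - a), G (a + b) (b - 1) := by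
  rw [sum_sigma', sum_sigma']
  refine sum_nbij' (fun x => ⟨x.1 - x.2 - 1, x.2 + 1⟩) (fun y => ⟨y.1 + y.2, y.2 - 1⟩)
    ?_ ?_ ?_ ?_ ?_
  · rintro ⟨n, j⟩ h
    simp only [mem_sigma, mem_range, mem_Icc] at h ⊢
    omega
  · rintro ⟨a, b⟩ h
    simp only [mem_sigma, mem_range, mem_Icc] at h ⊢
    omega
  · rintro ⟨n, j⟩ h
    simp only [mem_sigma, mem_range] at h
    have e1 : n - j - 1 + (j + 1) = n := by omega
    simp [e1]
  · rintro ⟨a, b⟩ h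
    simp only [mem_sigma, mem_range, mem_Icc] at h
    have e1 : a + b - (b - 1) - 1 = a := by omega
    have e2 : b - 1 + 1 = b := by omega
    simp [e1, e2]
  · rintro ⟨n, j⟩ h
    simp only [mem_sigma, mem_range] at h
    have e1 : n - j - 1 + (j + 1) = n := by omega
    have e2 : j + 1 - 1 = j := by omega
    simp only [e1, e2]

lemma L6 (r s : ℕ → ℂ) (M η : PowerSeries ℂ)
    (hM0 : PowerSeries.constantCoeff (R := ℂ) M = 0)
    (hM : M = substSeries r (PowerSeries.X * (1 + M)))
    (hη : η = (1 + M)⁻¹ * substSeries s (PowerSeries.X * (1 + M)))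
    (k : ℕ) :
    Tc r s M (k + 1)
      = Polynomial.X * Tc r s M k - Polynomial.C (coeff (R := ℂ) (k + 1) η) := by
  have hL : Tc r s M (k + 1)
      = (∑ n ∈ range (k + 1),
          Polynomial.C (coeff (R := ℂ) k ((X * (1 + M)) ^ n)) * cfAppell r s (n + 1))
        + ∑ a ∈ range (k + 1), ∑ b ∈ Icc 1 (k - a),
            Polynomial.C (r b * coeff (R := ℂ) k ((X * (1 + M)) ^ (b + a))) * cfAppell r s (a + 1) := by
    rw [Tc, sum_range_succ']
    have h0 : Polynomial.C (coeff (R := ℂ) (k + 1) ((X * (1 + M)) ^ 0)) * cfAppell r s 0 = 0 := by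
      simp [coeff_one]
    rw [h0, add_zero, ← sum_add_distrib]
    refine sum_congr rfl fun n hn => ?_
    have hn' : n ≤ k := by
      have := mem_range.mp hn; omega
    rw [lemPow r M hM n k]
    have hshr : ∑ j ∈ Icc 1 k, r j * coeff (R := ℂ) k ((X * (1 + M)) ^ (j + n))
        = ∑ b ∈ Icc 1 (k - n), r b * coeff (R := ℂ) k ((X * (1 + M)) ^ (b + n)) := by
      refine (sum_subset (Icc_subset_Icc_right (by omega)) fun j hj hj' => ?_).symm
      have : k < j + n := by simp only [mem_Icc] at hj hj'; omega
      rw [lem1 M _ _ this, mul_zero]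
    rw [hshr, map_add, add_mul, map_sum, sum_mul]
  have hT2 : ∑ n ∈ range (k + 1), ∑ j ∈ range n,
        Polynomial.C (coeff (R := ℂ) k ((X * (1 + M)) ^ n) * r (j + 1)) * cfAppell r s (n - j)
      = ∑ a ∈ range (k + 1), ∑ b ∈ Icc 1 (k - a),
          Polynomial.C (r b * coeff (R := ℂ) k ((X * (1 + M)) ^ (b + a))) * cfAppell r s (a + 1) := by
    rw [sum_tri k (fun n j =>
      Polynomial.C (coeff (R := ℂ) k ((X * (1 + M)) ^ n) * r (j + 1)) * cfAppell r s (n - j))]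
    refine sum_congr rfl fun a ha => sum_congr rfl fun b hb => ?_
    have hb' : 1 ≤ b := (mem_Icc.mp hb).1
    have e1 : b - 1 + 1 = b := by omega
    have e2 : a + b - (b - 1) = a + 1 := by omega
    have e3 : a + b = b + a := by omega
    rw [e1, e2, e3, mul_comm (r b)]
  have hR : Polynomial.X * Tc r s M k - Polynomial.C (coeff (R := ℂ) (k + 1) η)
      = (∑ n ∈ range (k + 1),
          Polynomial.C (coeff (R := ℂ) k ((X * (1 + M)) ^ n)) * cfAppell r s (n + 1))
        + ∑ a ∈ range (k + 1), ∑ b ∈ Icc 1 (k - a),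
            Polynomial.C (r b * coeff (R := ℂ) k ((X * (1 + M)) ^ (b + a))) * cfAppell r s (a + 1) := by
    rw [Tc, Finset.mul_sum]
    have step : ∀ n ∈ range (k + 1),
        Polynomial.X * (Polynomial.C (coeff (R := ℂ) k ((X * (1 + M)) ^ n)) * cfAppell r s n)
          = Polynomial.C (coeff (R := ℂ) k ((X * (1 + M)) ^ n)) * cfAppell r s (n + 1)
            + (∑ j ∈ range n,
                Polynomial.C (coeff (R := ℂ) k ((X * (1 + M)) ^ n) * r (j + 1)) * cfAppell r s (n - j))
            + Polynomial.C (coeff (R := ℂ) k ((X * (1 + M)) ^ n) * s (n + 1)) := by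
      intro n _
      calc Polynomial.X * (Polynomial.C (coeff (R := ℂ) k ((X * (1 + M)) ^ n)) * cfAppell r s n)
          = Polynomial.C (coeff (R := ℂ) k ((X * (1 + M)) ^ n)) * (Polynomial.X * cfAppell r s n) := by
            ring
        _ = _ := by
            rw [cfAppell_rec r s n, mul_add, mul_add, Finset.mul_sum, ← map_mul]
            congr 1
            rw [add_right_inj]
            refine sum_congr rfl fun j _ => ?_
            rw [← mul_assoc, ← map_mul]
    rw [sum_congr rfl step, sum_add_distrib, sum_add_distrib]
    have hcancel : ∑ n ∈ range (k + 1),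
        Polynomial.C (coeff (R := ℂ) k ((X * (1 + M)) ^ n) * s (n + 1))
          = Polynomial.C (coeff (R := ℂ) (k + 1) η) := by
      rw [etaCoeffSucc s M η hη hM0 k, map_sum]
      exact sum_congr rfl fun n _ => by rw [mul_comm]
    rw [hcancel, hT2]
    ring
  rw [hL, hR]

lemma L7 (r s : ℕ → ℂ) (M η : PowerSeries ℂ)
    (hM0 : PowerSeries.constantCoeff (R := ℂ) M = 0)
    (hM : M = substSeries r (PowerSeries.X * (1 + M)))
    (hη : η = (1 + M)⁻¹ * substSeries s (PowerSeries.X * (1 + M)))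
    (k : ℕ) :
    Tc r s M k
      = ∑ j ∈ range (k + 1), Polynomial.C (coeff (R := ℂ) j (1 - η)) * Polynomial.X ^ (k - j) := by
  induction k with
  | zero =>
    rw [Tc_zero]
    have : coeff (R := ℂ) 0 (1 - η) = 1 := by
      rw [map_sub, coeff_zero_eq_constantCoeff, etaCoeff0 s M η hη hM0]
      simp
    simp [this, etaCoeff0 s M η hη hM0]
  | succ k ih =>
    rw [L6 r s M η hM0 hM hη k, ih, Finset.mul_sum]
    have h1 : ∀ j ∈ range (k + 1),
        Polynomial.X * (Polynomial.C (coeff (R := ℂ) j (1 - η)) * Polynomial.X ^ (k - j))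
          = Polynomial.C (coeff (R := ℂ) j (1 - η)) * Polynomial.X ^ (k + 1 - j) := by
      intro j hj
      have : k + 1 - j = (k - j) + 1 := by have := mem_range.mp hj; omega
      rw [this, pow_succ]
      ring
    rw [sum_congr rfl h1]
    conv_rhs => rw [sum_range_succ]
    have h2 : Polynomial.C (coeff (R := ℂ) (k + 1) (1 - η)) * Polynomial.X ^ (k + 1 - (k + 1))
        = -Polynomial.C (coeff (R := ℂ) (k + 1) η) := by
      rw [map_sub, coeff_one, if_neg (Nat.succ_ne_zero k)]
      simp
    rw [h2]
    ring

/-- with `M` the unique zero-constant-term solution of `M = R(w(1+M))`,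
`η = (1+M)⁻¹·S(w(1+M))`, and `φ` the unital linear functional on `ℂ[x]` with
`φ(xⁿ) = [wⁿ](1−η)⁻¹`, the functional `φ` is centered on the c-free Appell polynomials
and its covariances with them are the two-state free cumulants:
`φ(Aₙ) = 0` and `φ(A₁·Aₙ) = s_{n+1}` for every `n ≥ 1`. -/
theorem cfAppell_centered_and_covariances (r s : ℕ → ℂ) (M η : PowerSeries ℂ)
    (hM0 : PowerSeries.constantCoeff (R := ℂ) M = 0)
    (hM : M = substSeries r (PowerSeries.X * (1 + M)))
    (hη : η = (1 + M)⁻¹ * substSeries s (PowerSeries.X * (1 + M)))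
    (φl : Polynomial ℂ →ₗ[ℂ] ℂ)
    (hφ : ∀ m : ℕ, φl (Polynomial.X ^ m) = PowerSeries.coeff (R := ℂ) m (1 - η)⁻¹) :
    (∀ n, 1 ≤ n → φl (cfAppell r s n) = 0) ∧
      (∀ n, 1 ≤ n → φl (cfAppell r s 1 * cfAppell r s n) = s (n + 1)) := by
  have hη0 : constantCoeff (R := ℂ) η = 0 := etaCoeff0 s M η hη hM0
  have h1η : constantCoeff (R := ℂ) (1 - η) ≠ 0 := by
    rw [map_sub, map_one, hη0, sub_zero]; exact one_ne_zero
  -- φl of C a * p = a * φl p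
  have hCmul : ∀ (a : ℂ) (p : Polynomial ℂ), φl (Polynomial.C a * p) = a * φl p := by
    intro a p
    rw [← Polynomial.smul_eq_C_mul, map_smul, smul_eq_mul]
  -- φl (Tc k) = δ_{k 0}
  have hφTc : ∀ k, φl (Tc r s M k) = if k = 0 then 1 else 0 := by
    intro k
    rw [L7 r s M η hM0 hM hη k, map_sum]
    have h1 : ∀ j ∈ range (k + 1),
        φl (Polynomial.C (coeff (R := ℂ) j (1 - η)) * Polynomial.X ^ (k - j))
          = coeff (R := ℂ) j (1 - η) * coeff (R := ℂ) (k - j) (1 - η)⁻¹ := by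
      intro j _
      rw [hCmul, hφ]
    rw [sum_congr rfl h1]
    have h2 : ∑ x ∈ range (k + 1), coeff (R := ℂ) x (1 - η) * coeff (R := ℂ) (k - x) (1 - η)⁻¹
        = coeff (R := ℂ) k ((1 - η) * (1 - η)⁻¹) := by
      rw [coeff_mul, Finset.Nat.sum_antidiagonal_eq_sum_range_succ_mk]
    rw [h2, mul_comm, PowerSeries.inv_mul_cancel _ h1η, coeff_one]
  -- φl (A k) = δ_{k 0}
  have hA : ∀ k, φl (cfAppell r s k) = if k = 0 then 1 else 0 := by
    intro k
    induction k using Nat.strong_induction_on with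
    | _ k ih =>
      have h := hφTc k
      rw [Tc, map_sum] at h
      cases k with
      | zero =>
        simp only [range_one, sum_singleton, pow_zero, coeff_zero_eq_constantCoeff,
          map_one, Polynomial.C_1, one_mul] at h
        simpa using h
      | succ m =>
        rw [sum_range_succ, hCmul, lem2 M hM0 (m + 1), one_mul] at h
        have hz : ∀ n ∈ range (m + 1),
            φl (Polynomial.C (coeff (R := ℂ) (m + 1) ((X * (1 + M)) ^ n)) * cfAppell r s n) = 0 := by
          intro n hn
          have hn' : n < m + 1 := mem_range.mp hn
          rw [hCmul]
          cases n with
          | zero =>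
            have : coeff (R := ℂ) (m + 1) ((X * (1 + M)) ^ 0 : PowerSeries ℂ) = 0 := by
              rw [pow_zero, coeff_one, if_neg (Nat.succ_ne_zero m)]
            rw [this, zero_mul]
          | succ i =>
            rw [ih (i + 1) hn', if_neg (Nat.succ_ne_zero i), mul_zero]
        rw [sum_congr rfl hz, sum_const_zero, zero_add, if_neg (Nat.succ_ne_zero m)] at h
        rw [h, if_neg (Nat.succ_ne_zero m)]
  have hA0 : φl (cfAppell r s 0) = 1 := by simpa using hA 0
  have hAzero : ∀ n, 1 ≤ n → φl (cfAppell r s n) = 0 := by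
    intro n hn
    rw [hA n, if_neg (by omega)]
  refine ⟨hAzero, fun n hn => ?_⟩
  have hA1 : cfAppell r s 1 = Polynomial.X - Polynomial.C (s 1) := by
    rw [cfAppell]
    simp [cfAppell]
  have hXA : φl (Polynomial.X * cfAppell r s n) = s (n + 1) := by
    rw [cfAppell_rec r s n, map_add, map_add]
    have e1 : φl (cfAppell r s (n + 1)) = 0 := hAzero (n + 1) (by omega)
    have e2 : φl (∑ j ∈ Finset.range n, Polynomial.C (r (j + 1)) * cfAppell r s (n - j)) = 0 := by
      rw [map_sum]
      refine sum_eq_zero fun j hj => ?_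
      have : 1 ≤ n - j := by have := mem_range.mp hj; omega
      rw [hCmul, hAzero (n - j) this, mul_zero]
    have e3 : φl (Polynomial.C (s (n + 1))) = s (n + 1) := by
      have : Polynomial.C (s (n + 1)) = Polynomial.C (s (n + 1)) * cfAppell r s 0 := by
        simp [cfAppell]
      rw [this, hCmul, hA0, mul_one]
    rw [e1, e2, e3, zero_add, zero_add]
  rw [hA1, sub_mul, map_sub, hXA, hCmul, hAzero n hn, mul_zero, sub_zero]
end

section
/- Suppose the free cumulant series is quadratic and the two-state free cumulant series is simple quadratic: r₁ = b, r₂ = β, rₖ = 0 for k ≥ 3, and s₂ = 1, sₖ = 0 for k ≠ 2 (b, β ∈ ℂ). Then the c-free Appell polynomials are orthogonal with respect to φ: φ(Aₙ·Aₘ) = 0 for all n ≠ m, and moreover φ(Aₙ²) = β^{n−1} for all n ≥ 1. -/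
/-! ### Auxiliary lemmas -/

lemma cfA0 (r s : ℕ → ℂ) : cfAppell r s 0 = 1 := by rw [cfAppell]

lemma cfAsucc (r s : ℕ → ℂ) (n : ℕ) : cfAppell r s (n+1) =
    Polynomial.X * cfAppell r s n
        - ∑ j ∈ Finset.range n, Polynomial.C (r (j + 1)) * cfAppell r s (n - j)
        - Polynomial.C (s (n + 1)) := by rw [cfAppell]

lemma cfA_deg (r s : ℕ → ℂ) : ∀ n : ℕ,
    (cfAppell r s n).natDegree ≤ n ∧ (cfAppell r s n).coeff n = 1 := by
  intro n
  induction n using Nat.strong_induction_on with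
  | _ n ih =>
    match n with
    | 0 => simp [cfA0]
    | n + 1 =>
      rw [cfAsucc]
      have hdeg : ∀ j ∈ Finset.range n,
          (Polynomial.C (r (j+1)) * cfAppell r s (n - j)).natDegree ≤ n := by
        intro j hj
        refine le_trans Polynomial.natDegree_mul_le ?_
        have := (ih (n - j) (by omega)).1
        simp only [Polynomial.natDegree_C, zero_add]
        omega
      constructor
      · refine le_trans (Polynomial.natDegree_sub_le _ _) ?_
        simp only [Polynomial.natDegree_C]
        refine max_le (le_trans (Polynomial.natDegree_sub_le _ _) ?_) (by omega)
        refine max_le (le_trans Polynomial.natDegree_mul_le ?_) ?_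
        · have := (ih n (by omega)).1
          simp [Polynomial.natDegree_X]; omega
        · calc (∑ j ∈ Finset.range n, Polynomial.C (r (j+1)) * cfAppell r s (n - j)).natDegree
              ≤ n := Polynomial.natDegree_sum_le_of_forall_le _ _ hdeg
          _ ≤ n + 1 := by omega
      · rw [Polynomial.coeff_sub, Polynomial.coeff_sub, Polynomial.coeff_X_mul,
          (ih n (by omega)).2, Polynomial.coeff_C]
        have hsum : (∑ j ∈ Finset.range n, Polynomial.C (r (j+1)) * cfAppell r s (n - j)).coeff (n+1) = 0 := by
          rw [Polynomial.finset_sum_coeff]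
          refine Finset.sum_eq_zero fun j hj => ?_
          have hd := hdeg j hj
          exact Polynomial.coeff_eq_zero_of_natDegree_lt (by omega)
        rw [hsum]
        simp

lemma cfA1 (r s : ℕ → ℂ) (hs : ∀ k, k ≠ 2 → s k = 0) :
    cfAppell r s 1 = Polynomial.X := by
  rw [cfAsucc, cfA0, hs 1 (by omega)]
  simp

lemma cfA2 (b : ℂ) (r s : ℕ → ℂ) (hr1 : r 1 = b) (hs2 : s 2 = 1) :
    cfAppell r s 2 = Polynomial.X * cfAppell r s 1 - Polynomial.C b * cfAppell r s 1 - 1 := by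
  rw [cfAsucc, hs2]
  simp [hr1]

lemma cfAstep (b β : ℂ) (r s : ℕ → ℂ) (hr1 : r 1 = b) (hr2 : r 2 = β)
    (hr : ∀ k, 3 ≤ k → r k = 0) (hs : ∀ k, k ≠ 2 → s k = 0) (n : ℕ) (hn : 1 ≤ n) :
    cfAppell r s (n + 2) = Polynomial.X * cfAppell r s (n + 1)
      - Polynomial.C b * cfAppell r s (n + 1) - Polynomial.C β * cfAppell r s n := by
  rw [cfAsucc, hs (n+2) (by omega)]
  have hsum : ∑ j ∈ Finset.range (n+1), Polynomial.C (r (j+1)) * cfAppell r s (n + 1 - j)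
      = Polynomial.C b * cfAppell r s (n + 1) + Polynomial.C β * cfAppell r s n := by
    have hsub : Finset.range 2 ⊆ Finset.range (n+1) := by
      apply Finset.range_subset_range.2; omega
    rw [← Finset.sum_subset hsub]
    · rw [Finset.sum_range_succ, Finset.sum_range_one]
      simp [hr1, hr2]
    · intro j hj hj2
      simp only [Finset.mem_range] at hj hj2
      rw [hr (j+1) (by omega)]
      simp
  rw [hsum]
  simp only [map_zero]
  ring

lemma coeff_Xh_pow (h : PowerSeries ℂ) (k n : ℕ) (hn : n < k) :
    PowerSeries.coeff (R := ℂ) n ((PowerSeries.X * h) ^ k) = 0 := by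
  rw [mul_pow, mul_comm, PowerSeries.coeff_mul_X_pow']
  simp [Nat.not_le.2 hn]

lemma substR (b β : ℂ) (r : ℕ → ℂ) (hr1 : r 1 = b) (hr2 : r 2 = β)
    (hr : ∀ k, 3 ≤ k → r k = 0) (h : PowerSeries ℂ) :
    substSeries r (PowerSeries.X * h) =
      PowerSeries.C (R := ℂ) b * (PowerSeries.X * h) + PowerSeries.C (R := ℂ) β * (PowerSeries.X * h) ^ 2 := by
  ext n
  rw [substSeries, PowerSeries.coeff_mk]
  simp only [map_add, PowerSeries.coeff_C_mul]
  match n with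
  | 0 =>
    rw [show (PowerSeries.X * h) ^ 2 = PowerSeries.X * (h * (PowerSeries.X * h)) by ring]
    simp
  | 1 =>
    rw [Finset.Icc_self, Finset.sum_singleton, hr1, pow_one,
      coeff_Xh_pow h 2 1 (by omega)]
    simp
  | (m+2) =>
    have hsub : Finset.Icc 1 2 ⊆ Finset.Icc 1 (m+2) := by
      apply Finset.Icc_subset_Icc_right; omega
    rw [← Finset.sum_subset hsub]
    · rw [show Finset.Icc 1 2 = {1, 2} by decide]
      rw [Finset.sum_insert (by decide), Finset.sum_singleton, hr1, hr2, pow_one]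
    · intro k hk hk2
      simp only [Finset.mem_Icc] at hk hk2
      rw [hr k (by omega), zero_mul]

lemma substS (s : ℕ → ℂ) (hs2 : s 2 = 1) (hs : ∀ k, k ≠ 2 → s k = 0) (h : PowerSeries ℂ) :
    substSeries s (PowerSeries.X * h) = (PowerSeries.X * h) ^ 2 := by
  ext n
  rw [substSeries, PowerSeries.coeff_mk]
  match n with
  | 0 => simp [coeff_Xh_pow h 2 0 (by omega)]
  | 1 =>
    rw [Finset.Icc_self, Finset.sum_singleton, hs 1 (by omega),
      coeff_Xh_pow h 2 1 (by omega)]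
    simp
  | (m+2) =>
    have hmem : 2 ∈ Finset.Icc 1 (m+2) := by simp
    rw [← Finset.add_sum_erase _ _ hmem, hs2, one_mul]
    have : ∑ k ∈ (Finset.Icc 1 (m+2)).erase 2,
        s k * PowerSeries.coeff (R := ℂ) (m+2) ((PowerSeries.X*h)^k) = 0 := by
      refine Finset.sum_eq_zero fun k hk => ?_
      rw [hs k (Finset.ne_of_mem_erase hk), zero_mul]
    rw [this, add_zero]

/-- Generating series of the values `φ(xᵏ·p)`. -/
noncomputable def Tser (φl : Polynomial ℂ →ₗ[ℂ] ℂ) (p : Polynomial ℂ) : PowerSeries ℂ :=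
  PowerSeries.mk fun k => φl (Polynomial.X ^ k * p)

lemma Tser_coeff (φl : Polynomial ℂ →ₗ[ℂ] ℂ) (p : Polynomial ℂ) (k : ℕ) :
    PowerSeries.coeff (R := ℂ) k (Tser φl p) = φl (Polynomial.X ^ k * p) :=
  PowerSeries.coeff_mk _ _

lemma Tser_sub (φl : Polynomial ℂ →ₗ[ℂ] ℂ) (p q : Polynomial ℂ) :
    Tser φl (p - q) = Tser φl p - Tser φl q := by
  ext k
  simp [Tser_coeff, mul_sub, map_sub]

lemma Tser_Cmul (φl : Polynomial ℂ →ₗ[ℂ] ℂ) (c : ℂ) (p : Polynomial ℂ) :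
    Tser φl (Polynomial.C c * p) = PowerSeries.C (R := ℂ) c * Tser φl p := by
  ext k
  rw [Tser_coeff, PowerSeries.coeff_C_mul, Tser_coeff]
  rw [show Polynomial.X ^ k * (Polynomial.C c * p) = c • (Polynomial.X ^ k * p) by
    rw [Polynomial.smul_eq_C_mul]; ring]
  rw [map_smul, smul_eq_mul]

lemma Tser_shift (φl : Polynomial ℂ →ₗ[ℂ] ℂ) (p : Polynomial ℂ) :
    PowerSeries.X * Tser φl (Polynomial.X * p)
      = Tser φl p - PowerSeries.C (R := ℂ) (φl p) := by
  ext k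
  match k with
  | 0 =>
    rw [PowerSeries.coeff_zero_X_mul, map_sub, Tser_coeff]
    simp
  | k + 1 =>
    rw [PowerSeries.coeff_succ_X_mul, map_sub, Tser_coeff, Tser_coeff]
    rw [show Polynomial.X ^ k * (Polynomial.X * p) = Polynomial.X ^ (k+1) * p by ring]
    simp [PowerSeries.coeff_C]

/-- if the free cumulant series is quadratic (`r₁ = b`, `r₂ = β`, `rₖ = 0`
for `k ≥ 3`) and the two-state free cumulant series is simple quadratic (`s₂ = 1`,
`sₖ = 0` for `k ≠ 2`), then the c-free Appell polynomials are orthogonal with respect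
to `φ`: `φ(Aₙ·Aₘ) = 0` for `n ≠ m`, and `φ(Aₙ²) = β^{n−1}` for `n ≥ 1`. -/
theorem cfAppell_orthogonal_of_quadratic_cumulants (b β : ℂ) (r s : ℕ → ℂ)
    (hr1 : r 1 = b) (hr2 : r 2 = β) (hr : ∀ k, 3 ≤ k → r k = 0)
    (hs2 : s 2 = 1) (hs : ∀ k, k ≠ 2 → s k = 0)
    (M η : PowerSeries ℂ)
    (hM0 : PowerSeries.constantCoeff (R := ℂ) M = 0)
    (hM : M = substSeries r (PowerSeries.X * (1 + M)))
    (hη : η = (1 + M)⁻¹ * substSeries s (PowerSeries.X * (1 + M)))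
    (φl : Polynomial ℂ →ₗ[ℂ] ℂ)
    (hφ : ∀ m : ℕ, φl (Polynomial.X ^ m) = PowerSeries.coeff (R := ℂ) m (1 - η)⁻¹) :
    (∀ n m : ℕ, n ≠ m → φl (cfAppell r s n * cfAppell r s m) = 0) ∧
      (∀ n, 1 ≤ n → φl (cfAppell r s n * cfAppell r s n) = β ^ (n - 1)) := by
  set A : ℕ → Polynomial ℂ := cfAppell r s with hA
  set G : PowerSeries ℂ := 1 + M with hG
  set u : PowerSeries ℂ := PowerSeries.X * G with hu
  set F : PowerSeries ℂ := (1 - η)⁻¹ with hF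
  -- constant coefficients
  have hGc : PowerSeries.constantCoeff (R := ℂ) G = 1 := by simp [hG, hM0]
  have hGne : PowerSeries.constantCoeff (R := ℂ) G ≠ 0 := by rw [hGc]; exact one_ne_zero
  -- the key algebraic identity for u
  have I1 : u = PowerSeries.X + PowerSeries.C (R := ℂ) b * (PowerSeries.X * u)
      + PowerSeries.C (R := ℂ) β * (PowerSeries.X * u ^ 2) := by
    have h1 : M = PowerSeries.C (R := ℂ) b * u + PowerSeries.C (R := ℂ) β * u ^ 2 := by
      rw [hM]; exact substR b β r hr1 hr2 hr G
    calc u = PowerSeries.X + PowerSeries.X * M := by rw [hu, hG]; ring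
    _ = _ := by rw [h1]; ring
  -- η = X * u
  have hη' : η = PowerSeries.X * u := by
    rw [hη, substS s hs2 hs G]
    calc (1+M)⁻¹ * (PowerSeries.X * (1+M))^2
        = (1+M)⁻¹ * (1+M) * (PowerSeries.X * (PowerSeries.X * (1+M))) := by ring
    _ = PowerSeries.X * u := by
        rw [PowerSeries.inv_mul_cancel _ (by simpa [hG] using hGne), one_mul, hu, hG]
  have hFc0 : PowerSeries.constantCoeff (R := ℂ) (1 - η) = 1 := by
    rw [hη']
    simp
  have hFc : PowerSeries.constantCoeff (R := ℂ) F = 1 := by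
    rw [hF, PowerSeries.constantCoeff_inv, hFc0, inv_one]
  -- I2 : F = 1 + X * u * F
  have I2 : F = 1 + PowerSeries.X * u * F := by
    have h2 : F * (1 - η) = 1 := by
      rw [hF, mul_comm]
      exact PowerSeries.mul_inv_cancel _ (by rw [hFc0]; exact one_ne_zero)
    rw [hη'] at h2
    linear_combination h2
  -- T of constant 1 is F
  have Tone : Tser φl 1 = F := by
    ext k
    rw [Tser_coeff, mul_one, hφ k, hF]
  have hφ1 : φl 1 = 1 := by
    have h0 := hφ 0
    rw [pow_zero] at h0
    rw [h0, PowerSeries.coeff_zero_eq_constantCoeff]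
    exact hFc
  -- main structure: T(A_{n+1}) = β^n · u^{n+1} · F
  have key : ∀ n : ℕ, Tser φl (A (n+1)) = (PowerSeries.C (R := ℂ) β)^n * (u^(n+1) * F) := by
    intro n
    induction n using Nat.strong_induction_on with
    | _ n ih =>
      match n with
      | 0 =>
        have h1 : A 1 = Polynomial.X * 1 := by rw [hA, cfA1 r s hs, mul_one]
        have h2 : PowerSeries.X * Tser φl (A 1) = PowerSeries.X * (u * F) := by
          rw [h1, Tser_shift, Tone, hφ1]
          rw [map_one]
          linear_combination I2
        have := mul_left_cancel₀ (PowerSeries.X_ne_zero (R := ℂ)) h2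
        rw [this]; ring
      | 1 =>
        have hT1 : Tser φl (A 1) = u * F := by
          have := ih 0 (by omega)
          simpa using this
        have hφA1 : φl (A 1) = 0 := by
          have h0 := Tser_coeff φl (A 1) 0
          rw [pow_zero, one_mul] at h0
          rw [← h0, hT1]
          rw [show (0 : ℕ) = 0 from rfl]
          have : PowerSeries.coeff (R := ℂ) 0 (u * F) = 0 := by
            rw [hu]
            rw [show PowerSeries.X * G * F = PowerSeries.X * (G * F) by ring]
            exact PowerSeries.coeff_zero_X_mul _
          exact this
        have h1 : A 2 = Polynomial.X * A 1 - Polynomial.C b * A 1 - 1 := by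
          rw [hA]
          exact cfA2 b r s hr1 hs2
        have h2 : PowerSeries.X * Tser φl (A 2)
            = PowerSeries.X * ((PowerSeries.C (R := ℂ) β)^1 * (u^2 * F)) := by
          rw [h1, Tser_sub, Tser_sub, Tser_Cmul, mul_sub, mul_sub,
            Tser_shift, hT1, hφA1, Tone]
          rw [map_zero]
          linear_combination F * I1
        have := mul_left_cancel₀ (PowerSeries.X_ne_zero (R := ℂ)) h2
        rw [this]
      | (m+2) =>
        have ih1 : Tser φl (A (m+2)) = (PowerSeries.C (R := ℂ) β)^(m+1) * (u^(m+2) * F) :=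
          ih (m+1) (by omega)
        have ih0 : Tser φl (A (m+1)) = (PowerSeries.C (R := ℂ) β)^m * (u^(m+1) * F) :=
          ih m (by omega)
        have hφA : φl (A (m+2)) = 0 := by
          have h0 := Tser_coeff φl (A (m+2)) 0
          rw [pow_zero, one_mul] at h0
          rw [← h0, ih1]
          rw [show (PowerSeries.C (R := ℂ) β)^(m+1) * (u^(m+2) * F)
              = PowerSeries.X * ((PowerSeries.C (R := ℂ) β)^(m+1) * (G * u^(m+1) * F)) by
            rw [hu]; ring]
          exact PowerSeries.coeff_zero_X_mul _
        have h1 : A (m+3) = Polynomial.X * A (m+2) - Polynomial.C b * A (m+2)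
            - Polynomial.C β * A (m+1) := by
          rw [hA]
          exact cfAstep b β r s hr1 hr2 hr hs (m+1) (by omega)
        have h2 : PowerSeries.X * Tser φl (A (m+3))
            = PowerSeries.X * ((PowerSeries.C (R := ℂ) β)^(m+2) * (u^(m+3) * F)) := by
          rw [h1, Tser_sub, Tser_sub, Tser_Cmul, Tser_Cmul, mul_sub, mul_sub,
            Tser_shift, ih1, ih0, hφA]
          rw [map_zero]
          linear_combination ((PowerSeries.C (R := ℂ) β)^(m+1) * u^(m+1) * F) * I1
        have := mul_left_cancel₀ (PowerSeries.X_ne_zero (R := ℂ)) h2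
        rw [this]
  -- coefficients of u^n * F
  have coefflow : ∀ n k : ℕ, k < n → PowerSeries.coeff (R := ℂ) k (u^n * F) = 0 := by
    intro n k hk
    rw [hu, mul_pow, show PowerSeries.X^n * G^n * F = (G^n * F) * PowerSeries.X^n by ring,
      PowerSeries.coeff_mul_X_pow']
    simp [Nat.not_le.2 hk]
  have coeffdiag : ∀ n : ℕ, PowerSeries.coeff (R := ℂ) n (u^n * F) = 1 := by
    intro n
    rw [hu, mul_pow, show PowerSeries.X^n * G^n * F = (G^n * F) * PowerSeries.X^n by ring,
      PowerSeries.coeff_mul_X_pow']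
    simp only [le_refl, if_true, Nat.sub_self]
    rw [PowerSeries.coeff_zero_eq_constantCoeff, map_mul, map_pow, hGc, hFc]
    simp
  -- the value of φ on x^k·A_n for n ≥ 1
  have base : ∀ n k : ℕ, φl (Polynomial.X ^ k * A (n+1))
      = β^n * PowerSeries.coeff (R := ℂ) k (u^(n+1) * F) := by
    intro n k
    rw [← Tser_coeff, key n, ← map_pow, PowerSeries.coeff_C_mul]
  -- expansion of φ(A n * p)
  have expand : ∀ (n m : ℕ), φl (A n * A m)
      = ∑ k ∈ Finset.range (m+1), (A m).coeff k * φl (Polynomial.X ^ k * A n) := by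
    intro n m
    conv_lhs => rw [Polynomial.as_sum_range' (A m) (m+1)
      (lt_of_le_of_lt (cfA_deg r s m).1 (by omega)), Finset.mul_sum, map_sum]
    refine Finset.sum_congr rfl fun k hk => ?_
    rw [show A n * Polynomial.monomial k ((A m).coeff k)
        = (A m).coeff k • (Polynomial.X ^ k * A n) by
      rw [← Polynomial.C_mul_X_pow_eq_monomial, Polynomial.smul_eq_C_mul]; ring]
    rw [map_smul, smul_eq_mul]
  -- orthogonality for m < n
  have ortho : ∀ n m : ℕ, m < n → φl (A n * A m) = 0 := by
    intro n m hmn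
    obtain ⟨n', rfl⟩ : ∃ n', n = n' + 1 := ⟨n - 1, by omega⟩
    rw [expand]
    refine Finset.sum_eq_zero fun k hk => ?_
    simp only [Finset.mem_range] at hk
    rw [base, coefflow (n'+1) k (by omega), mul_zero, mul_zero]
  constructor
  · intro n m hnm
    rcases lt_or_gt_of_ne hnm with h | h
    · rw [mul_comm]
      exact ortho m n h
    · exact ortho n m h
  · intro n hn
    obtain ⟨n', rfl⟩ : ∃ n', n = n' + 1 := ⟨n - 1, by omega⟩
    rw [expand, Finset.sum_range_succ]
    have hzero : ∀ k ∈ Finset.range (n'+1),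
        (A (n'+1)).coeff k * φl (Polynomial.X ^ k * A (n'+1)) = 0 := by
      intro k hk
      simp only [Finset.mem_range] at hk
      rw [base, coefflow (n'+1) k (by omega), mul_zero, mul_zero]
    rw [Finset.sum_eq_zero hzero, zero_add, base, coeffdiag, mul_one,
      (cfA_deg r s (n'+1)).2, one_mul]
    simp
end
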